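/- Let B be a field, A ⊆ B a subring which is an integral domain, and R = A + XB[X]. Then: (i) R is atomic if and only if R is a BFD, if and only if R is an HFD, if and only if A is a field; (ii) R is an FFD if and only if A is a field and the quotient group B*/A* is finite (where B* and A* denote the nonzero elements of B and the units of A, respectively, with A* viewed as a subgroup of B*); (iii) R is a UFD if and only if A is a field and B = A. -/

import Mathlib

namespace FactorizationPaper

variable {R : Type*} [CommRing R]

/-- `S` is a saturated multiplicatively closed subset of `R`:
it contains `1`, is closed under multiplication, and `x*y ∈ S` implies `x ∈ S` and `y ∈ S`. -/
def Saturated (S : Set R) : Prop :=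
  1 ∈ S ∧ (∀ x ∈ S, ∀ y ∈ S, x * y ∈ S) ∧ ∀ x y : R, x * y ∈ S → x ∈ S ∧ y ∈ S

/-- The submonoid of `R` associated to a saturated multiplicatively closed set. -/
def Saturated.submonoid {S : Set R} (hS : Saturated S) : Submonoid R where
  carrier := S
  one_mem' := hS.1
  mul_mem' := fun {a b} ha hb => hS.2.1 a ha b hb

section ElementDefs

variable (S : Set R) {N : Type*} [AddCommGroup N] [Module R N]

/-- `m ∼^S n` : `m` and `n` are S-associates. -/
def SAssoc (m n : N) : Prop := (∃ s ∈ S, m = s • n) ∧ (∃ s ∈ S, n = s • m)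

/-- `m ≈^S n` : `m` and `n` are S-strong associates. -/
def SStrongAssoc (m n : N) : Prop := ∃ u : R, IsUnit u ∧ u ∈ S ∧ m = u • n

/-- `m ≅^S n` : `m` and `n` are S-very strong associates. -/
def SVeryStrongAssoc (m n : N) : Prop :=
  SAssoc S m n ∧ ((m = 0 ∧ n = 0) ∨ ∀ s ∈ S, m = s • n → IsUnit s)

/-- `m` is S-primitive. -/
def SPrimitive (m : N) : Prop := ∀ s ∈ S, ∀ n : N, m = s • n → SAssoc S n m

/-- `m` is S-strongly primitive. -/
def SStronglyPrimitive (m : N) : Prop := ∀ s ∈ S, ∀ n : N, m = s • n → SStrongAssoc S n m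

/-- `m` is S-very strongly primitive. -/
def SVeryStronglyPrimitive (m : N) : Prop := ∀ s ∈ S, ∀ n : N, m = s • n → SVeryStrongAssoc S n m

/-- the three kinds of S-primitivity, indexed by `Fin 3` :
`0` = primitive, `1` = strongly primitive, `2` = very strongly primitive. -/
def PrimOf (k : Fin 3) (m : N) : Prop :=
  match k with
  | 0 => SPrimitive S m
  | 1 => SStronglyPrimitive S m
  | 2 => SVeryStronglyPrimitive S m

/-- `m = s • n` is a compact S-atomic factorization of `m`. -/
def IsCompactFactorization (m : N) (s : R) (n : N) : Prop :=
  s ∈ S ∧ SPrimitive S n ∧ m = s • n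

/-- `m = s₁ ⋯ s_k • n` (with the `sᵢ` the members of the list `l`, nonunits in `S`)
is an S-factorization of `m`, of length `l.length`. -/
def IsSFactorization (m : N) (l : List R) (n : N) : Prop :=
  (∀ s ∈ l, s ∈ S ∧ ¬ IsUnit s) ∧ m = l.prod • n

end ElementDefs

/-- `a ∼ b` : associates in `R` (i.e. S-associates with `S = R`, in `R` as an `R`-module). -/
def Assoc (a b : R) : Prop := SAssoc (Set.univ : Set R) a b

/-- `a ≈ b` : strong associates in `R`. -/
def StrongAssoc (a b : R) : Prop := SStrongAssoc (Set.univ : Set R) a b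

/-- `a ≅ b` : very strong associates in `R`. -/
def VeryStrongAssoc (a b : R) : Prop := SVeryStrongAssoc (Set.univ : Set R) a b

/-- `a` is irreducible. -/
def Irred (a : R) : Prop := ¬ IsUnit a ∧ ∀ b c : R, a = b * c → Assoc a b ∨ Assoc a c

/-- `a` is strongly irreducible. -/
def StrongIrred (a : R) : Prop :=
  ¬ IsUnit a ∧ ∀ b c : R, a = b * c → StrongAssoc a b ∨ StrongAssoc a c

/-- `a` is very strongly irreducible. -/
def VeryStrongIrred (a : R) : Prop :=
  ¬ IsUnit a ∧ ∀ b c : R, a = b * c → VeryStrongAssoc a b ∨ VeryStrongAssoc a c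

/-- the three kinds of irreducibility, indexed by `Fin 3` :
`0` = irreducible, `1` = strongly irreducible, `2` = very strongly irreducible. -/
def IrredOf (k : Fin 3) (a : R) : Prop :=
  match k with
  | 0 => Irred a
  | 1 => StrongIrred a
  | 2 => VeryStrongIrred a

section ElementDefs2

variable (S : Set R) {N : Type*} [AddCommGroup N] [Module R N]

/-- `m = s₁ ⋯ s_k • n` is an S-atomic factorization
(each `sᵢ` irreducible and in `S`, `n` S-primitive). -/
def IsSAtomicFactorization (m : N) (l : List R) (n : N) : Prop :=
  IsSFactorization S m l n ∧ (∀ s ∈ l, Irred s) ∧ SPrimitive S n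

/-- an (α, β)-S-factorization: each `sᵢ` is α (a kind of irreducible)
and `n` is S-β (a kind of S-primitive). -/
def IsABFactorization (kα kβ : Fin 3) (m : N) (l : List R) (n : N) : Prop :=
  IsSFactorization S m l n ∧ (∀ s ∈ l, IrredOf kα s) ∧ PrimOf S kβ n

/-- Isomorphism of S-atomic factorizations: same length, S-associate primitive parts,
and the irreducible parts match up to permutation and associates. -/
def FactorIso (l : List R) (n : N) (l' : List R) (n' : N) : Prop :=
  l.length = l'.length ∧ SAssoc S n n' ∧
    ∃ l'' : List R, l'.Perm l'' ∧ List.Forall₂ Assoc l l''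

end ElementDefs2

section SetDefs

variable (S : Set R) {N : Type*} [AddCommGroup N] [Module R N]

/-- `E ⊆ N` is compactly S-atomic. -/
def CompactlySAtomic (E : Set N) : Prop :=
  ∀ m ∈ E, m ≠ 0 → ∃ s n, IsCompactFactorization S m s n

/-- `E ⊆ N` is semi-S-factorable. -/
def SemiSFactorable (E : Set N) : Prop :=
  CompactlySAtomic S E ∧ ∀ m ∈ E, m ≠ 0 → ∀ s n s' n',
    IsCompactFactorization S m s n → IsCompactFactorization S m s' n' → Assoc s s'

/-- `E ⊆ N` is S-factorable. -/
def SFactorable (E : Set N) : Prop :=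
  SemiSFactorable S E ∧ ∀ m ∈ E, m ≠ 0 → ∀ s n s' n',
    IsCompactFactorization S m s n → IsCompactFactorization S m s' n' → SAssoc S n n'

/-- `S` splits `E ⊆ N`. -/
def Splits (E : Set N) : Prop :=
  SemiSFactorable S E ∧
    ∀ r : R, SPrimitive S r → ∀ m : N, SPrimitive S m →
      r • m ≠ 0 → r • m ∈ E → SPrimitive S (r • m)

end SetDefs

/-- The set of zero divisors of the module `M` in `R`. -/
def ZDiv (R : Type*) [CommRing R] (M : Type*) [AddCommGroup M] [Module R M] : Set R :=
  {r : R | ∃ m : M, m ≠ 0 ∧ r • m = 0}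

/-- The annihilator of `M` in `R`, as a set. -/
def AnnSet (R : Type*) [CommRing R] (M : Type*) [AddCommGroup M] [Module R M] : Set R :=
  {r : R | ∀ m : M, r • m = 0}

/-- The annihilator of `M` in `R`, as an ideal. -/
def AnnIdeal (R : Type*) [CommRing R] (M : Type*) [AddCommGroup M] [Module R M] : Ideal R where
  carrier := AnnSet R M
  zero_mem' := fun m => zero_smul R m
  add_mem' := fun {a b} ha hb m => by
    rw [add_smul, ha m, hb m, add_zero]
  smul_mem' := fun c x hx m => by
    rw [smul_eq_mul, mul_smul, hx m, smul_zero]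

section ModuleProps

variable (S : Set R) (N : Type*) [AddCommGroup N] [Module R N]

/-- `N` is S-présimplifiable. -/
def SPresimplifiable : Prop := ∀ s ∈ S, ∀ m : N, s • m = m → IsUnit s ∨ m = 0

/-- `N` is S-atomic. -/
def SAtomicModule : Prop := ∀ m : N, m ≠ 0 → ∃ l n, IsSAtomicFactorization S m l n

/-- `N` is (α, β)-S-atomic. -/
def ABAtomicModule (kα kβ : Fin 3) : Prop :=
  ∀ m : N, m ≠ 0 → ∃ l n, IsABFactorization S kα kβ m l n

/-- `N` is an S-UFM. -/
def SUFM : Prop := SAtomicModule S N ∧ ∀ m : N, m ≠ 0 → ∀ l n l' n',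
  IsSAtomicFactorization S m l n → IsSAtomicFactorization S m l' n' → FactorIso S l n l' n'

/-- `N` is an S-FFM. -/
def SFFM : Prop := SAtomicModule S N ∧ ∀ m : N, m ≠ 0 →
  ∃ Fs : Set (List R × N), Fs.Finite ∧
    ∀ l n, IsSAtomicFactorization S m l n → ∃ p ∈ Fs, FactorIso S l n p.1 p.2

/-- `N` is an S-BFM. -/
def SBFM : Prop := ∀ m : N, m ≠ 0 → ∃ B : ℕ,
  ∀ l n, IsSFactorization S m l n → l.length ≤ B

/-- `N` is an S-HFM. -/
def SHFM : Prop := SAtomicModule S N ∧ ∀ m : N, m ≠ 0 → ∀ l n l' n',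
  IsSAtomicFactorization S m l n → IsSAtomicFactorization S m l' n' → l.length = l'.length

end ModuleProps

section InE

variable (E : Set R)

/-- `R` is présimplifiable in `E`. -/
def PresimpIn : Prop := ∀ a ∈ E, a ≠ 0 → ¬ IsUnit a → ∀ r : R, a = r * a → IsUnit r ∨ a = 0

/-- `R` is atomic in `E`. -/
def AtomicIn : Prop := ∀ a ∈ E, a ≠ 0 → ¬ IsUnit a →
  ∃ l n, IsSAtomicFactorization (Set.univ : Set R) a l n

/-- `R` has unique factorization in `E`. -/
def UFIn : Prop := AtomicIn E ∧ ∀ a ∈ E, a ≠ 0 → ¬ IsUnit a → ∀ l n l' n',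
  IsSAtomicFactorization (Set.univ : Set R) a l n →
  IsSAtomicFactorization (Set.univ : Set R) a l' n' →
  FactorIso (Set.univ : Set R) l n l' n'

/-- `R` has finite factorization in `E`. -/
def FFIn : Prop := AtomicIn E ∧ ∀ a ∈ E, a ≠ 0 → ¬ IsUnit a →
  ∃ Fs : Set (List R × R), Fs.Finite ∧ ∀ l n,
    IsSAtomicFactorization (Set.univ : Set R) a l n →
      ∃ p ∈ Fs, FactorIso (Set.univ : Set R) l n p.1 p.2

/-- `R` is half factorial in `E`. -/
def HFIn : Prop := AtomicIn E ∧ ∀ a ∈ E, a ≠ 0 → ¬ IsUnit a → ∀ l n l' n',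
  IsSAtomicFactorization (Set.univ : Set R) a l n →
  IsSAtomicFactorization (Set.univ : Set R) a l' n' → l.length = l'.length

/-- `R` has bounded factorization in `E`. -/
def BFIn : Prop := ∀ a ∈ E, a ≠ 0 → ¬ IsUnit a →
  ∃ B : ℕ, ∀ l n, IsSFactorization (Set.univ : Set R) a l n → l.length ≤ B

end InE

/-- The set `T = S⁻¹S'` in the localization `R_S`. -/
def locT {S : Set R} (hS : Saturated S) (S' : Set R) : Set (Localization hS.submonoid) :=
  {x | ∃ s' ∈ S', ∃ t : hS.submonoid, x = Localization.mk s' t}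

section DomainDefs

variable (D : Type*) [CommRing D]

/-- two lists of ring elements agree up to order and associates. -/
def ListAssociated (l l' : List D) : Prop :=
  ∃ l'' : List D, l'.Perm l'' ∧ List.Forall₂ Associated l l''

/-- `D` is atomic: every nonzero nonunit is a finite product of irreducibles. -/
def DomAtomic : Prop := ∀ x : D, x ≠ 0 → ¬ IsUnit x →
  ∃ l : List D, (∀ a ∈ l, Irreducible a) ∧ x = l.prod

/-- `D` is a bounded factorization domain. -/
def DomBFD : Prop := ∀ x : D, x ≠ 0 → ¬ IsUnit x →
  ∃ B : ℕ, ∀ l : List D, (∀ a ∈ l, ¬ IsUnit a) → x = l.prod → l.length ≤ B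

/-- `D` is a half factorial domain. -/
def DomHFD : Prop := DomAtomic D ∧ ∀ x : D, x ≠ 0 → ¬ IsUnit x →
  ∀ l l' : List D, (∀ a ∈ l, Irreducible a) → x = l.prod →
    (∀ a ∈ l', Irreducible a) → x = l'.prod → l.length = l'.length

/-- `D` is a finite factorization domain. -/
def DomFFD : Prop := DomAtomic D ∧ ∀ x : D, x ≠ 0 → ¬ IsUnit x →
  ∃ Fs : Set (List D), Fs.Finite ∧ ∀ l : List D, (∀ a ∈ l, Irreducible a) → x = l.prod →
    ∃ l' ∈ Fs, ListAssociated D l l'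

/-- `D` is a unique factorization domain. -/
def DomUFD : Prop := DomAtomic D ∧ ∀ x : D, x ≠ 0 → ¬ IsUnit x →
  ∀ l l' : List D, (∀ a ∈ l, Irreducible a) → x = l.prod →
    (∀ a ∈ l', Irreducible a) → x = l'.prod → ListAssociated D l l'

end DomainDefs

section AXBXdefs

variable (B : Type*) [CommRing B] (A : Subring B)

/-- The ring `R = A + X·B[X]`, as a subring of `B[X]`. -/
def AXBX : Subring (Polynomial B) where
  carrier := {f | f.coeff 0 ∈ A}
  zero_mem' := by simp only [Set.mem_setOf_eq, Polynomial.coeff_zero]; exact zero_mem A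
  one_mem' := by
    simp only [Set.mem_setOf_eq, Polynomial.coeff_one, if_pos rfl]
    exact one_mem A
  add_mem' := fun {f g} hf hg => by
    simp only [Set.mem_setOf_eq, Polynomial.coeff_add] at *
    exact add_mem hf hg
  neg_mem' := fun {f} hf => by
    simp only [Set.mem_setOf_eq, Polynomial.coeff_neg] at *
    exact neg_mem hf
  mul_mem' := fun {f g} hf hg => by
    simp only [Set.mem_setOf_eq, Polynomial.mul_coeff_zero] at *
    exact mul_mem hf hg

/-- The saturated multiplicatively closed subset `S = (U(B) ∩ A) ∪ {u·Xⁿ : u ∈ U(B), n ≥ 1}`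
of `R = A + X·B[X]`. -/
def Sset : Set (AXBX B A) :=
  {f | (∃ u : B, IsUnit u ∧ u ∈ A ∧ (f : Polynomial B) = Polynomial.C u) ∨
       (∃ u : B, IsUnit u ∧ ∃ n : ℕ, 1 ≤ n ∧
          (f : Polynomial B) = Polynomial.C u * Polynomial.X ^ n)}

/-- The saturated multiplicatively closed subset `S₀ = U(B) ∩ A` of `A`. -/
def S0set : Set A := {a : A | IsUnit (a : B)}

end AXBXdefs



/-! ### Auxiliary development for statement19 -/
section Aux
open Polynomial
variable {B : Type*} [Field B] {A : Subring B}

theorem mem_AXBX' {f : Polynomial B} : f ∈ AXBX B A ↔ f.coeff 0 ∈ A := Iff.rfl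

theorem coe_mul' (x y : AXBX B A) : ((x*y : AXBX B A) : B[X]) = (x:B[X]) * y := rfl

theorem coe_prod' (l : List (AXBX B A)) :
    ((l.prod : AXBX B A) : B[X]) = (l.map (fun x : AXBX B A => (x:B[X]))).prod := by
  induction l with
  | nil => rfl
  | cons a l ih => simp [ih]

theorem coe_eq_zero' {x : AXBX B A} : (x : B[X]) = 0 ↔ x = 0 :=
  ⟨fun h => Subtype.ext h, fun h => by simp [h]⟩

/-- units of R -/
theorem isUnit_iff' {x : AXBX B A} :
    IsUnit x ↔ ∃ a b : B, a ∈ A ∧ b ∈ A ∧ a * b = 1 ∧ (x : B[X]) = C a := by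
  constructor
  · rintro ⟨u, rfl⟩
    have h1 : ((u : AXBX B A) : B[X]) * ((u⁻¹ : (AXBX B A)ˣ) : AXBX B A) = 1 := by
      rw [← coe_mul', u.mul_inv]; rfl
    have hu : IsUnit ((u : AXBX B A) : B[X]) := IsUnit.of_mul_eq_one _ h1
    rw [Polynomial.isUnit_iff] at hu
    obtain ⟨r, hr, hrx⟩ := hu
    have hv : IsUnit (((u⁻¹ : (AXBX B A)ˣ) : AXBX B A) : B[X]) :=
      IsUnit.of_mul_eq_one _ (by rw [mul_comm] at h1; exact h1)
    rw [Polynomial.isUnit_iff] at hv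
    obtain ⟨s, hs, hsx⟩ := hv
    refine ⟨r, s, ?_, ?_, ?_, hrx.symm⟩
    · have := (u : AXBX B A).2; rw [mem_AXBX', ← hrx] at this; simpa using this
    · have := ((u⁻¹ : (AXBX B A)ˣ) : AXBX B A).2; rw [mem_AXBX', ← hsx] at this
      simpa using this
    · have : (C r) * (C s) = 1 := by rw [hrx, hsx]; exact h1
      rw [← C_mul, ← C_1] at this
      exact C_injective this
  · rintro ⟨a, b, ha, hb, hab, hx⟩
    refine IsUnit.of_mul_eq_one (a := x) ⟨C b, by simpa [mem_AXBX'] using hb⟩ ?_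
    apply Subtype.ext
    rw [coe_mul', hx]; push_cast; rw [← C_mul, hab, C_1]

theorem natDegree_eq_zero_of_isUnit' {x : AXBX B A} (h : IsUnit x) :
    (x:B[X]).natDegree = 0 := by
  obtain ⟨a, b, _, _, _, hx⟩ := isUnit_iff'.mp h
  rw [hx]; exact natDegree_C a

theorem isUnit_of_natDegree_eq_zero' (hF : IsField A) {x : AXBX B A} (hx : x ≠ 0)
    (h : (x:B[X]).natDegree = 0) : IsUnit x := by
  have hc := Polynomial.eq_C_of_natDegree_eq_zero h
  have hmem : (x:B[X]).coeff 0 ∈ A := x.2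
  have hne : (x:B[X]).coeff 0 ≠ 0 := by
    intro h0
    apply hx; apply Subtype.ext; rw [hc, h0, C_0]; rfl
  obtain ⟨b, hb⟩ := hF.mul_inv_cancel (a := ⟨_, hmem⟩) (by simpa [Subtype.ext_iff] using hne)
  exact isUnit_iff'.mpr ⟨_, b, hmem, b.2, by simpa [Subtype.ext_iff] using hb, hc⟩

theorem one_le_natDegree' (hF : IsField A) {x : AXBX B A} (hx : x ≠ 0) (hu : ¬ IsUnit x) :
    1 ≤ (x:B[X]).natDegree := by
  by_contra h
  exact hu (isUnit_of_natDegree_eq_zero' hF hx (by omega))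

theorem no_proper_split' {q : AXBX B A} (hq : Irreducible q) {f g : B[X]}
    (hfg : (q:B[X]) = f * g) (hf : 1 ≤ f.natDegree) (hg : 1 ≤ g.natDegree)
    (hmem : f.coeff 0 = 0 ∨ g.coeff 0 ≠ 0) : False := by
  classical
  have hq0 : q ≠ 0 := hq.ne_zero
  have hqv : (q:B[X]) ≠ 0 := fun h => hq0 (coe_eq_zero'.mp h)
  have hfne : f ≠ 0 := by rintro rfl; rw [zero_mul] at hfg; exact hqv hfg
  have hgne : g ≠ 0 := by rintro rfl; rw [mul_zero] at hfg; exact hqv hfg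
  set c : B := if g.coeff 0 = 0 then 1 else g.coeff 0 with hc
  have hcne : c ≠ 0 := by
    rw [hc]; split_ifs with h
    · exact one_ne_zero
    · exact h
  have hFmem : (C c * f).coeff 0 ∈ A := by
    rw [mul_coeff_zero, coeff_C_zero]
    rcases hmem with h | h
    · rw [h, mul_zero]; exact A.zero_mem
    · rw [hc, if_neg h]
      have : g.coeff 0 * f.coeff 0 = (q:B[X]).coeff 0 := by
        rw [hfg, mul_coeff_zero, mul_comm]
      rw [this]; exact q.2
  have hGmem : (C c⁻¹ * g).coeff 0 ∈ A := by
    rw [mul_coeff_zero, coeff_C_zero]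
    by_cases h : g.coeff 0 = 0
    · rw [h, mul_zero]; exact A.zero_mem
    · rw [hc, if_neg h, inv_mul_cancel₀ h]; exact A.one_mem
  have hq' : q = (⟨C c * f, hFmem⟩ : AXBX B A) * ⟨C c⁻¹ * g, hGmem⟩ := by
    apply Subtype.ext
    rw [coe_mul']
    show (q:B[X]) = (C c * f) * (C c⁻¹ * g)
    rw [hfg]
    have : (C c * f) * (C c⁻¹ * g) = (C c * C c⁻¹) * (f * g) := by ring
    rw [this, ← C_mul, mul_inv_cancel₀ hcne, C_1, one_mul]
  rcases hq.2 hq' with h | h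
  · have h0 := natDegree_eq_zero_of_isUnit' h
    have h1 : ((⟨C c * f, hFmem⟩ : AXBX B A) : B[X]).natDegree = f.natDegree := by
      show (C c * f).natDegree = f.natDegree
      rw [natDegree_C_mul hcne]
    omega
  · have h0 := natDegree_eq_zero_of_isUnit' h
    have h1 : ((⟨C c⁻¹ * g, hGmem⟩ : AXBX B A) : B[X]).natDegree = g.natDegree := by
      show (C c⁻¹ * g).natDegree = g.natDegree
      rw [natDegree_C_mul (inv_ne_zero hcne)]
    omega

/-- R-irreducible implies B[X]-irreducible, when A is a field -/
theorem irred_coe (hF : IsField A) {q : AXBX B A} (hq : Irreducible q) :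
    Irreducible (q : B[X]) := by
  have hq0 : q ≠ 0 := hq.ne_zero
  have hqv : (q:B[X]) ≠ 0 := fun h => hq0 (coe_eq_zero'.mp h)
  constructor
  · intro hu
    rw [Polynomial.isUnit_iff] at hu
    obtain ⟨r, hr, hrx⟩ := hu
    exact hq.1 (isUnit_of_natDegree_eq_zero' hF hq0 (by rw [← hrx]; exact natDegree_C r))
  · intro f g hfg
    by_cases hf : f.natDegree = 0
    · left
      have := Polynomial.eq_C_of_natDegree_eq_zero hf
      rw [this]
      refine Polynomial.isUnit_C.mpr (isUnit_iff_ne_zero.mpr ?_)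
      intro h0
      apply hqv
      rw [hfg, this, h0, C_0, zero_mul]
    by_cases hg : g.natDegree = 0
    · right
      have := Polynomial.eq_C_of_natDegree_eq_zero hg
      rw [this]
      refine Polynomial.isUnit_C.mpr (isUnit_iff_ne_zero.mpr ?_)
      intro h0
      apply hqv
      rw [hfg, this, h0, C_0, mul_zero]
    exfalso
    have hf1 : 1 ≤ f.natDegree := by omega
    have hg1 : 1 ≤ g.natDegree := by omega
    by_cases hg0 : g.coeff 0 = 0
    · by_cases hf0 : f.coeff 0 = 0
      · exact no_proper_split' hq hfg hf1 hg1 (Or.inl hf0)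
      · exact no_proper_split' hq (by rw [hfg, mul_comm]) hg1 hf1 (Or.inl hg0)
    · exact no_proper_split' hq hfg hf1 hg1 (Or.inr hg0)

end Aux


section Aux2
open Polynomial
variable {B : Type*} [Field B] {A : Subring B}

/-- the element X of R -/
noncomputable def Xe (B : Type*) [Field B] (A : Subring B) : AXBX B A :=
  ⟨X, by rw [mem_AXBX', coeff_X_zero]; exact A.zero_mem⟩

/-- the element uX of R -/
noncomputable def cXe (A : Subring B) (u : B) : AXBX B A :=
  ⟨C u * X, by rw [mem_AXBX', mul_coeff_zero, coeff_X_zero, mul_zero]; exact A.zero_mem⟩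

theorem Xe_ne_zero : Xe B A ≠ 0 := by
  intro h
  have : (X : B[X]) = 0 := congrArg Subtype.val h
  exact X_ne_zero this

theorem cXe_ne_zero {u : B} (hu : u ≠ 0) : cXe A u ≠ 0 := by
  intro h
  have : (C u * X : B[X]) = 0 := congrArg Subtype.val h
  rcases mul_eq_zero.mp this with h | h
  · exact hu (by simpa using h)
  · exact X_ne_zero h

theorem natDegree_cXe (u : B) (hu : u ≠ 0) : ((cXe A u : AXBX B A):B[X]).natDegree = 1 := by
  show (C u * X).natDegree = 1
  rw [natDegree_C_mul hu, natDegree_X]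

theorem not_isUnit_cXe {u : B} (hu : u ≠ 0) : ¬ IsUnit (cXe A u) := by
  intro h
  have := natDegree_eq_zero_of_isUnit' h
  rw [natDegree_cXe u hu] at this
  omega

theorem not_isUnit_Xe : ¬ IsUnit (Xe B A) := by
  intro h
  have := natDegree_eq_zero_of_isUnit' h
  have h1 : ((Xe B A : AXBX B A):B[X]).natDegree = 1 := natDegree_X
  omega

theorem irred_cXe (hF : IsField A) {u : B} (hu : u ≠ 0) : Irreducible (cXe A u) := by
  refine ⟨not_isUnit_cXe hu, fun f g hfg => ?_⟩
  have hne : cXe A u ≠ 0 := cXe_ne_zero hu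
  have hfne : f ≠ 0 := by rintro rfl; rw [zero_mul] at hfg; exact hne hfg
  have hgne : g ≠ 0 := by rintro rfl; rw [mul_zero] at hfg; exact hne hfg
  have hfne' : (f:B[X]) ≠ 0 := fun h => hfne (coe_eq_zero'.mp h)
  have hgne' : (g:B[X]) ≠ 0 := fun h => hgne (coe_eq_zero'.mp h)
  have hco : ((cXe A u : AXBX B A):B[X]) = (f:B[X]) * (g:B[X]) := by
    rw [← coe_mul', ← hfg]
  have hdeg : (f:B[X]).natDegree + (g:B[X]).natDegree = 1 := by
    rw [← natDegree_mul hfne' hgne', ← hco, natDegree_cXe u hu]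
  rcases Nat.add_eq_one_iff.mp hdeg with ⟨h1, _⟩ | ⟨_, h2⟩
  · exact Or.inl (isUnit_of_natDegree_eq_zero' hF hfne h1)
  · exact Or.inr (isUnit_of_natDegree_eq_zero' hF hgne h2)

theorem irred_Xe (hF : IsField A) : Irreducible (Xe B A) := by
  have : Xe B A = cXe A 1 := by
    apply Subtype.ext; show (X:B[X]) = C 1 * X; rw [C_1, one_mul]
  rw [this]
  exact irred_cXe hF one_ne_zero

/-- key length bound -/
theorem length_le_natDegree (hF : IsField A) :
    ∀ (l : List (AXBX B A)) (x : AXBX B A), x ≠ 0 → (∀ q ∈ l, ¬ IsUnit q) → x = l.prod →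
      l.length ≤ (x:B[X]).natDegree := by
  intro l
  induction l with
  | nil => intro x _ _ _; simp
  | cons q l ih =>
    intro x hx hl hprod
    have hq : q ≠ 0 := by
      rintro rfl
      rw [List.prod_cons, zero_mul] at hprod
      exact hx hprod
    have hl' : (l.prod : AXBX B A) ≠ 0 := by
      rintro h
      rw [List.prod_cons, h, mul_zero] at hprod
      exact hx hprod
    have hdq : 1 ≤ (q:B[X]).natDegree := one_le_natDegree' hF hq (hl q List.mem_cons_self)
    have hih := ih l.prod hl' (fun r hr => hl r (List.mem_cons_of_mem q hr)) rfl
    have hco : (x:B[X]) = (q:B[X]) * ((l.prod : AXBX B A):B[X]) := by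
      rw [← coe_mul', ← List.prod_cons, hprod]
    have : (x:B[X]).natDegree = (q:B[X]).natDegree + ((l.prod : AXBX B A):B[X]).natDegree := by
      rw [hco, natDegree_mul (fun h => hq (coe_eq_zero'.mp h)) (fun h => hl' (coe_eq_zero'.mp h))]
    rw [List.length_cons]
    omega

theorem atomic_of_field (hF : IsField A) : DomAtomic (AXBX B A) := by
  intro x hx hu
  suffices H : ∀ n (x : AXBX B A), x ≠ 0 → ¬IsUnit x → (x:B[X]).natDegree ≤ n →
      ∃ l : List (AXBX B A), (∀ a ∈ l, Irreducible a) ∧ x = l.prod from H _ x hx hu le_rfl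
  intro n
  induction n using Nat.strong_induction_on with
  | _ n ih =>
    intro x hx hu hdeg
    by_cases hirr : Irreducible x
    · exact ⟨[x], by simp [hirr], by simp⟩
    · rw [irreducible_iff] at hirr
      push_neg at hirr
      obtain ⟨f, g, hfg, hf, hg⟩ := hirr hu
      have hfne : f ≠ 0 := by rintro rfl; rw [zero_mul] at hfg; exact hx hfg
      have hgne : g ≠ 0 := by rintro rfl; rw [mul_zero] at hfg; exact hx hfg
      have hdf : 1 ≤ (f:B[X]).natDegree := one_le_natDegree' hF hfne hf
      have hdg : 1 ≤ (g:B[X]).natDegree := one_le_natDegree' hF hgne hg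
      have hsum : (x:B[X]).natDegree = (f:B[X]).natDegree + (g:B[X]).natDegree := by
        rw [hfg, coe_mul', natDegree_mul (fun h => hfne (coe_eq_zero'.mp h))
          (fun h => hgne (coe_eq_zero'.mp h))]
      obtain ⟨lf, hlf1, hlf2⟩ := ih (f:B[X]).natDegree (by omega) f hfne hf le_rfl
      obtain ⟨lg, hlg1, hlg2⟩ := ih (g:B[X]).natDegree (by omega) g hgne hg le_rfl
      refine ⟨lf ++ lg, ?_, ?_⟩
      · intro a ha
        rcases List.mem_append.mp ha with h | h
        · exact hlf1 a h
        · exact hlg1 a h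
      · rw [List.prod_append, ← hlf2, ← hlg2, hfg]

theorem bfd_of_field (hF : IsField A) : DomBFD (AXBX B A) := by
  intro x hx _
  exact ⟨(x:B[X]).natDegree, fun l hl hprod => length_le_natDegree hF l x hx hl hprod⟩

end Aux2


section Aux3
open Polynomial
variable {B : Type*} [Field B] {A : Subring B}

theorem isField_A_iff : IsField A ↔ ∀ a : A, a ≠ 0 → ∃ b : A, a * b = 1 :=
  ⟨fun h _ ha => h.mul_inv_cancel ha, fun h => ⟨exists_pair_ne A, mul_comm, fun {a} ha => h a ha⟩⟩

/-- constant element of R -/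
noncomputable def CAe (A : Subring B) (a : B) (ha : a ∈ A) : AXBX B A :=
  ⟨C a, show (C a).coeff 0 ∈ A by rwa [coeff_C_zero]⟩

theorem coe_CAe {a : B} (ha : a ∈ A) : ((CAe A a ha : AXBX B A) : B[X]) = C a := rfl

theorem prod_coeff_zero (L : List B[X]) :
    L.prod.coeff 0 = (L.map (fun p => p.coeff 0)).prod := by
  induction L with
  | nil => simp
  | cons p L ih => simp [mul_coeff_zero, ih]

theorem not_isUnit_CA {a : B} (ha : a ∈ A) (hno : ∀ b : A, (⟨a, ha⟩ : A) * b ≠ 1) :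
    ¬ IsUnit (CAe A a ha) := by
  intro h
  obtain ⟨a', b, ha', hb, hab, hx⟩ := isUnit_iff'.mp h
  have : a = a' := C_injective (by exact hx)
  subst this
  exact hno ⟨b, hb⟩ (Subtype.ext hab)

theorem field_of_atomic (h : DomAtomic (AXBX B A)) : IsField A := by
  rw [isField_A_iff]
  intro a ha0
  by_contra hno
  push_neg at hno
  have haB : (a:B) ≠ 0 := fun h => ha0 (Subtype.ext h)
  obtain ⟨l, hirr, hprod⟩ := h (Xe B A) Xe_ne_zero not_isUnit_Xe
  have h0 : ∃ q ∈ l, (q:B[X]).coeff 0 = 0 := by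
    have h1 : (0:B) = (l.map (fun q : AXBX B A => (q:B[X]).coeff 0)).prod := by
      have h0 : ((Xe B A : AXBX B A):B[X]).coeff 0 = 0 := coeff_X_zero
      rw [← h0, hprod, coe_prod', prod_coeff_zero, List.map_map]
      rfl
    have h2 : (0:B) ∈ l.map (fun q : AXBX B A => (q:B[X]).coeff 0) :=
      List.prod_eq_zero_iff.mp h1.symm
    obtain ⟨q, hq, hq0⟩ := List.mem_map.mp h2
    exact ⟨q, hq, hq0⟩
  obtain ⟨q, hql, hq0⟩ := h0
  have hqirr := hirr q hql
  have hqne : (q:B[X]) ≠ 0 := fun h => hqirr.ne_zero (coe_eq_zero'.mp h)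
  have hmem : (C ((a:B))⁻¹ * (q:B[X])).coeff 0 ∈ A := by
    rw [mul_coeff_zero, coeff_C_zero, hq0, mul_zero]; exact A.zero_mem
  have hsplit : q = (CAe A (a:B) a.2) * ⟨C ((a:B))⁻¹ * (q:B[X]), hmem⟩ := by
    apply Subtype.ext
    rw [coe_mul']
    show (q:B[X]) = C (a:B) * (C ((a:B))⁻¹ * (q:B[X]))
    rw [← mul_assoc, ← C_mul, mul_inv_cancel₀ haB, C_1, one_mul]
  rcases hqirr.2 hsplit with h | h
  · exact not_isUnit_CA a.2 (by simpa using hno) h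
  · obtain ⟨r, s, hr, hs, hrs, hx⟩ := isUnit_iff'.mp h
    have : r = 0 := by
      have hx' : (C ((a:B))⁻¹ * (q:B[X])) = C r := hx
      have h1 : (C ((a:B))⁻¹ * (q:B[X])).coeff 0 = r := by rw [hx', coeff_C_zero]
      rw [mul_coeff_zero, coeff_C_zero, hq0, mul_zero] at h1
      exact h1.symm
    rw [this, zero_mul] at hrs
    exact zero_ne_one hrs

theorem field_of_bfd (h : DomBFD (AXBX B A)) : IsField A := by
  rw [isField_A_iff]
  intro a ha0
  by_contra hno
  push_neg at hno
  have haB : (a:B) ≠ 0 := fun h => ha0 (Subtype.ext h)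
  obtain ⟨Bd, hBd⟩ := h (Xe B A) Xe_ne_zero not_isUnit_Xe
  set n := Bd + 1 with hn
  have hmem : (C (((a:B))⁻¹ ^ n) * X).coeff 0 ∈ A := by
    rw [mul_coeff_zero, coeff_X_zero, mul_zero]; exact A.zero_mem
  set t : AXBX B A := ⟨C (((a:B))⁻¹ ^ n) * X, hmem⟩ with ht
  set l : List (AXBX B A) := List.replicate n (CAe A (a:B) a.2) ++ [t] with hldef
  have hlen : l.length = n + 1 := by simp [hldef]
  have hprod : Xe B A = l.prod := by
    apply Subtype.ext
    rw [coe_prod', hldef]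
    simp only [List.map_append, List.map_replicate, List.prod_append, List.prod_replicate,
      List.map_cons, List.map_nil, List.prod_cons, List.prod_nil, mul_one]
    show (X : B[X]) = (C (a:B))^n * (C (((a:B))⁻¹ ^ n) * X)
    rw [← C_pow, ← mul_assoc, ← C_mul, ← mul_pow, mul_inv_cancel₀ haB, one_pow, C_1, one_mul]
  have hnonunit : ∀ q ∈ l, ¬ IsUnit q := by
    intro q hq
    rcases List.mem_append.mp hq with h | h
    · have := List.eq_of_mem_replicate h
      rw [this]
      exact not_isUnit_CA a.2 (by simpa using hno)
    · have : q = t := by simpa using h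
      rw [this, ht]
      intro hu
      have := natDegree_eq_zero_of_isUnit' hu
      have h1 : (C (((a:B))⁻¹ ^ n) * X).natDegree = 1 := by
        rw [natDegree_C_mul (pow_ne_zero n (inv_ne_zero haB)), natDegree_X]
      exact absurd (this.symm.trans h1) (by omega)
  have := hBd l hnonunit hprod
  omega

theorem rel_lists {α : Type*} {r : α → α → Prop} :
    ∀ {l l' : List α}, Multiset.Rel r ↑l ↑l' → ∃ l'', l'.Perm l'' ∧ List.Forall₂ r l l'' := by
  classical
  intro l
  induction l with
  | nil =>
    intro l' h
    rw [show (([] : List α) : Multiset α) = 0 from rfl, Multiset.rel_zero_left,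
      Multiset.coe_eq_zero] at h
    exact ⟨[], by rw [h], List.Forall₂.nil⟩
  | cons a l ih =>
    intro l' h
    rw [show ((a :: l : List α) : Multiset α) = a ::ₘ ↑l from rfl, Multiset.rel_cons_left] at h
    obtain ⟨b, bs', hab, hrel, hbs⟩ := h
    have hbmem : b ∈ l' := by
      have : b ∈ (l' : Multiset α) := by rw [hbs]; exact Multiset.mem_cons_self b bs'
      simpa using this
    have herase : ((l'.erase b : List α) : Multiset α) = bs' := by
      rw [← Multiset.coe_erase, hbs, Multiset.erase_cons_head]
    obtain ⟨l'', hperm, hfa⟩ := ih (l' := l'.erase b) (by rw [herase]; exact hrel)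
    exact ⟨b :: l'', (List.perm_cons_erase hbmem).trans (hperm.cons b),
      List.Forall₂.cons hab hfa⟩

theorem hfd_of_field (hF : IsField A) : DomHFD (AXBX B A) := by
  refine ⟨atomic_of_field hF, fun x hx hu l l' hl hpl hl' hpl' => ?_⟩
  have key : Multiset.Rel Associated
      (↑(l.map (fun q : AXBX B A => (q:B[X]))) : Multiset B[X])
      (↑(l'.map (fun q : AXBX B A => (q:B[X]))) : Multiset B[X]) := by
    apply UniqueFactorizationMonoid.factors_unique
    · intro p hp
      simp only [Multiset.mem_coe, List.mem_map] at hp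
      obtain ⟨q, hq, rfl⟩ := hp
      exact irred_coe hF (hl q hq)
    · intro p hp
      simp only [Multiset.mem_coe, List.mem_map] at hp
      obtain ⟨q, hq, rfl⟩ := hp
      exact irred_coe hF (hl' q hq)
    · have e1 : (l.map (fun q : AXBX B A => (q:B[X]))).prod = (x:B[X]) := by
        rw [hpl]; exact (coe_prod' l).symm
      have e2 : (l'.map (fun q : AXBX B A => (q:B[X]))).prod = (x:B[X]) := by
        rw [hpl']; exact (coe_prod' l').symm
      rw [Multiset.prod_coe, Multiset.prod_coe, e1, e2]; exact Associated.refl _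
  obtain ⟨l'', hperm, hfa⟩ := rel_lists key
  have h1 := hfa.length_eq
  have h2 := hperm.length_eq
  simpa using h1.trans h2.symm

end Aux3


section Aux4
open Polynomial
variable {B : Type*} [Field B] {A : Subring B}

theorem unit_CAe {a b : B} (ha : a ∈ A) (hb : b ∈ A) (hab : a * b = 1) : IsUnit (CAe A a ha) :=
  isUnit_iff'.mpr ⟨a, b, ha, hb, hab, rfl⟩

theorem unit_CAe_of_field (hF : IsField A) {a : B} (ha : a ∈ A) (ha0 : a ≠ 0) :
    IsUnit (CAe A a ha) := by
  obtain ⟨b, hb⟩ := hF.mul_inv_cancel (a := ⟨a, ha⟩) (fun h => ha0 (by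
    simpa [Subtype.ext_iff] using h))
  exact unit_CAe ha b.2 (by simpa using congrArg (fun z : A => (z : B)) hb)

theorem associated_of_eq_unit_mul (hF : IsField A) {q t : AXBX B A} {c : B}
    (hc : c ∈ A) (hcne : c ≠ 0) (h : (q : B[X]) = C c * (t : B[X])) : Associated q t := by
  have hu : IsUnit (CAe A c hc) := unit_CAe_of_field hF hc hcne
  have heq : q = CAe A c hc * t := Subtype.ext h
  obtain ⟨U, hU⟩ := hu
  refine ⟨U⁻¹, ?_⟩
  rw [heq, ← hU]
  have h2 : (U : AXBX B A) * t * (U⁻¹ : (AXBX B A)ˣ) = t * ((U : AXBX B A) * (U⁻¹ : (AXBX B A)ˣ)) := by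
    ring
  rw [h2, U.mul_inv, mul_one]

theorem finite_lists {α : Type*} {T : Set α} (hT : T.Finite) :
    ∀ n : ℕ, {l : List α | l.length ≤ n ∧ ∀ x ∈ l, x ∈ T}.Finite := by
  intro n
  induction n with
  | zero =>
    refine Set.Finite.subset (Set.finite_singleton []) ?_
    rintro l ⟨hl, -⟩
    rw [Nat.le_zero, List.length_eq_zero_iff] at hl
    simp [hl]
  | succ n ih =>
    refine Set.Finite.subset ((Set.Finite.image2 List.cons hT ih).insert []) ?_
    rintro l ⟨hlen, hmem⟩
    cases l with
    | nil => exact Set.mem_insert _ _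
    | cons a l =>
      refine Set.mem_insert_of_mem _ (Set.mem_image2_of_mem (hmem a List.mem_cons_self) ?_)
      exact ⟨by simpa using hlen, fun x hx => hmem x (List.mem_cons_of_mem a hx)⟩

theorem exists_rep_list {α : Type*} {r : α → α → Prop} {T : Set α} :
    ∀ {l : List α}, (∀ q ∈ l, ∃ t ∈ T, r q t) →
      ∃ l', (∀ t ∈ l', t ∈ T) ∧ List.Forall₂ r l l' := by
  intro l
  induction l with
  | nil => intro _; exact ⟨[], by simp, List.Forall₂.nil⟩
  | cons a l ih =>
    intro h
    obtain ⟨t, ht, hrt⟩ := h a List.mem_cons_self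
    obtain ⟨l', hl'T, hfa⟩ := ih (fun q hq => h q (List.mem_cons_of_mem a hq))
    refine ⟨t :: l', ?_, List.Forall₂.cons hrt hfa⟩
    intro s hs
    rcases List.mem_cons.mp hs with rfl | hs
    · exact ht
    · exact hl'T s hs

theorem ffd_of_field_finite (hF : IsField A)
    (hQ : Finite (Bˣ ⧸ (Units.map (A.subtype.toMonoidHom)).range)) :
    DomFFD (AXBX B A) := by
  classical
  refine ⟨atomic_of_field hF, fun x hx hu => ?_⟩
  set H := (Units.map (A.subtype.toMonoidHom)).range with hH
  have hxv : (x:B[X]) ≠ 0 := fun h => hx (coe_eq_zero'.mp h)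
  set norm1 : B[X] → AXBX B A := fun p =>
    ⟨C (p.coeff 0)⁻¹ * p, by
      rw [mem_AXBX', mul_coeff_zero, coeff_C_zero]
      by_cases h : p.coeff 0 = 0
      · rw [h, mul_zero]; exact A.zero_mem
      · rw [inv_mul_cancel₀ h]; exact A.one_mem⟩ with hnorm1
  set T : Set (AXBX B A) :=
    (norm1 '' {p | p ∈ UniqueFactorizationMonoid.factors (x:B[X])}) ∪
      (Set.range (fun c : Bˣ ⧸ H => cXe A ((Quotient.out c : Bˣ) : B))) with hT
  have hTfin : T.Finite := by
    apply Set.Finite.union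
    · exact Set.Finite.image _ (Multiset.finite_toSet _)
    · exact Set.finite_range _
  refine ⟨{l : List (AXBX B A) | l.length ≤ (x:B[X]).natDegree ∧ ∀ q ∈ l, q ∈ T},
    finite_lists hTfin _, ?_⟩
  intro l hl hprod
  have hrep : ∀ q ∈ l, ∃ t ∈ T, Associated q t := by
    intro q hq
    have hqirr := hl q hq
    have hqB : Irreducible (q : B[X]) := irred_coe hF hqirr
    have hdvd : (q:B[X]) ∣ (x:B[X]) := by
      obtain ⟨m, hm⟩ : q ∣ l.prod := List.dvd_prod hq
      exact ⟨(m:B[X]), by rw [← coe_mul', ← hm, hprod]⟩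
    by_cases hq0 : (q:B[X]).coeff 0 = 0
    · -- q is an associate of X : it is u·X, pick representative from the quotient
      obtain ⟨h, hh⟩ := X_dvd_iff.mpr hq0
      have hhu : IsUnit h := by
        rcases hqB.2 hh with h1 | h1
        · exact absurd h1 (Polynomial.not_isUnit_X)
        · exact h1
      obtain ⟨u, huu, hCu⟩ := Polynomial.isUnit_iff.mp hhu
      have hu0 : u ≠ 0 := huu.ne_zero
      set U : Bˣ := Units.mk0 u hu0 with hUdef
      set c : Bˣ ⧸ H := QuotientGroup.mk U with hcdef
      have hout : ((Quotient.out c : Bˣ) : Bˣ ⧸ H) = QuotientGroup.mk U :=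
        QuotientGroup.out_eq' c
      rw [QuotientGroup.eq] at hout
      obtain ⟨a, ha⟩ := hout
      -- (a : B) = (out c)⁻¹ * u
      have haval : ((a : A) : B) = (((Quotient.out c : Bˣ)⁻¹ : Bˣ) : B) * u := by
        have := congrArg (fun w : Bˣ => (w : B)) ha
        simpa [hUdef] using this
      refine ⟨cXe A ((Quotient.out c : Bˣ) : B), Or.inr ⟨c, rfl⟩, ?_⟩
      have hane : ((a : A) : B) ≠ 0 := by
        intro h0
        have h1 : ((a : A) : B) * (((a⁻¹ : Aˣ) : A) : B) = 1 := by
          have h2 : ((a : Aˣ) : A) * ((a⁻¹ : Aˣ) : A) = 1 := a.mul_inv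
          have h3 := congrArg (fun z : A => (z : B)) h2
          push_cast at h3
          exact h3
        rw [h0, zero_mul] at h1
        exact zero_ne_one h1
      apply associated_of_eq_unit_mul hF ((a : A)).2 hane ?_
      · show (q:B[X]) = C ((a : A) : B) * (C ((Quotient.out c : Bˣ) : B) * X)
        set v : B := ((Quotient.out c : Bˣ) : B) with hv
        have hvne : v ≠ 0 := Units.ne_zero _
        have hinv : (((Quotient.out c : Bˣ)⁻¹ : Bˣ) : B) = v⁻¹ := by
          rw [hv]; exact Units.val_inv_eq_inv_val _
        rw [hh, ← hCu, haval, hinv, ← mul_assoc, ← C_mul]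
        have e : v⁻¹ * u * v = u := by field_simp
        rw [e]
        ring
    · -- q has nonzero constant term
      obtain ⟨p, hp, hassoc⟩ :=
        UniqueFactorizationMonoid.exists_mem_factors_of_dvd hxv hqB hdvd
      obtain ⟨w, hw⟩ := hassoc
      obtain ⟨u, huu, hCu⟩ := Polynomial.isUnit_iff.mp w.isUnit
      have hu0 : u ≠ 0 := huu.ne_zero
      have hqp : (q:B[X]) = C u⁻¹ * p := by
        rw [← hw, ← hCu,
          show C u⁻¹ * ((q:B[X]) * C u) = (C u⁻¹ * C u) * (q:B[X]) from by ring,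
          ← C_mul, inv_mul_cancel₀ hu0, C_1, one_mul]
      have hp0 : p.coeff 0 ≠ 0 := by
        intro h0
        apply hq0
        rw [hqp, mul_coeff_zero, h0, mul_zero]
      have hmem : u⁻¹ * p.coeff 0 ∈ A := by
        have e : (q:B[X]).coeff 0 = u⁻¹ * p.coeff 0 := by
          rw [hqp, mul_coeff_zero, coeff_C_zero]
        rw [← e]; exact q.2
      refine ⟨norm1 p, Or.inl ⟨p, hp, rfl⟩, ?_⟩
      apply associated_of_eq_unit_mul hF hmem (mul_ne_zero (inv_ne_zero hu0) hp0)
      show (q:B[X]) = C (u⁻¹ * p.coeff 0) * (C (p.coeff 0)⁻¹ * p)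
      rw [hqp, C_mul, mul_assoc, ← mul_assoc (C (p.coeff 0)), ← C_mul,
        mul_inv_cancel₀ hp0, C_1, one_mul]
  obtain ⟨l', hl'T, hfa⟩ := exists_rep_list hrep
  have hlen : l.length ≤ (x:B[X]).natDegree :=
    length_le_natDegree hF l x hx (fun q hq => (hl q hq).not_isUnit) hprod
  exact ⟨l', ⟨by rw [← hfa.length_eq]; exact hlen, hl'T⟩, l', List.Perm.refl l', hfa⟩

end Aux4


section Aux5
open Polynomial
variable {B : Type*} [Field B] {A : Subring B}

theorem x2_ne_zero : (Xe B A) * (Xe B A) ≠ 0 := mul_ne_zero Xe_ne_zero Xe_ne_zero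

theorem x2_not_unit : ¬ IsUnit ((Xe B A) * (Xe B A)) := fun h =>
  not_isUnit_Xe (isUnit_of_mul_isUnit_left h)

theorem prod_cXe {u : B} (hu : u ≠ 0) :
    (Xe B A) * (Xe B A) = (cXe A u) * (cXe A u⁻¹) := by
  apply Subtype.ext
  show (X * X : B[X]) = (C u * X) * (C u⁻¹ * X)
  rw [show (C u * X) * (C u⁻¹ * X) = (C u * C u⁻¹) * (X * X : B[X]) from by ring,
    ← C_mul, mul_inv_cancel₀ hu, C_1, one_mul]

theorem finite_quotient_of_ffd (h : DomFFD (AXBX B A)) :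
    Finite (Bˣ ⧸ (Units.map (A.subtype.toMonoidHom)).range) := by
  classical
  have hF : IsField A := field_of_atomic h.1
  set H := (Units.map (A.subtype.toMonoidHom)).range with hH
  obtain ⟨Fs, hFsfin, hFs⟩ := h.2 ((Xe B A) * (Xe B A)) x2_ne_zero x2_not_unit
  set Cq : AXBX B A → Set (Bˣ ⧸ H) := fun q =>
    {c | ∃ u : Bˣ, (q:B[X]) = C (u:B) * X ∧
      (c = QuotientGroup.mk u ∨ c = QuotientGroup.mk u⁻¹)} with hCq
  have hCqfin : ∀ q, (Cq q).Finite := by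
    intro q
    by_cases he : ∃ u : Bˣ, (q:B[X]) = C (u:B) * X
    · obtain ⟨u0, hu0⟩ := he
      apply Set.Finite.subset
        ((Set.finite_singleton (QuotientGroup.mk u0⁻¹ : Bˣ ⧸ H)).insert (QuotientGroup.mk u0))
      rintro c ⟨u, hu, hc⟩
      have huu0 : u = u0 := by
        have h1 : (C (u:B) * X).coeff 1 = (C (u0:B) * X).coeff 1 := by rw [← hu, ← hu0]
        have h2 : (u:B) = (u0:B) := by
          simpa [coeff_C_mul, coeff_X_one] using h1
        exact Units.ext h2
      subst huu0
      rcases hc with rfl | rfl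
      · exact Set.mem_insert _ _
      · exact Set.mem_insert_of_mem _ rfl
    · have : Cq q = ∅ := by
        rw [Set.eq_empty_iff_forall_notMem]
        rintro c ⟨u, hu, -⟩
        exact he ⟨u, hu⟩
      rw [this]
      exact Set.finite_empty
  set CC : Set (Bˣ ⧸ H) := ⋃ l' ∈ Fs, ⋃ q ∈ l', Cq q with hCC
  have hCCfin : CC.Finite :=
    Set.Finite.biUnion hFsfin (fun l' _ =>
      Set.Finite.biUnion (l'.finite_toSet) (fun q _ => hCqfin q))
  have hcover : ∀ c : Bˣ ⧸ H, c ∈ CC := by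
    intro c
    obtain ⟨u, rfl⟩ := QuotientGroup.mk_surjective c
    have hune : (u : B) ≠ 0 := Units.ne_zero u
    have huinv : ((u⁻¹ : Bˣ) : B) = ((u:B))⁻¹ := Units.val_inv_eq_inv_val u
    have hprod : (Xe B A) * (Xe B A)
        = ([cXe A (u:B), cXe A ((u:B))⁻¹] : List (AXBX B A)).prod := by
      rw [List.prod_cons, List.prod_singleton]
      exact prod_cXe hune
    have hirr : ∀ a ∈ ([cXe A (u:B), cXe A ((u:B))⁻¹] : List (AXBX B A)), Irreducible a := by
      intro a ha
      rcases List.mem_cons.mp ha with rfl | ha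
      · exact irred_cXe hF hune
      · rw [List.mem_singleton.mp ha]
        exact irred_cXe hF (inv_ne_zero hune)
    obtain ⟨l', hl'Fs, l'', hperm, hfa⟩ := hFs _ hirr hprod
    obtain ⟨y, t, hy1, -, rfl⟩ := List.forall₂_cons_left_iff.mp hfa
    have hyl' : y ∈ l' := hperm.mem_iff.mpr List.mem_cons_self
    -- from hy1 : Associated (cXe A u) y get y = C (u * a') X with a' a unit of A
    obtain ⟨U, hU⟩ := hy1
    obtain ⟨a', b', ha', hb', hab, hx⟩ := isUnit_iff'.mp U.isUnit
    have ha'0 : a' ≠ 0 := fun h0 => by rw [h0, zero_mul] at hab; exact zero_ne_one hab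
    have hyco : (y : B[X]) = C ((u:B) * a') * X := by
      have h1 : ((cXe A (u:B) * (U : AXBX B A) : AXBX B A) : B[X]) = (y : B[X]) :=
        congrArg Subtype.val hU
      rw [coe_mul', hx] at h1
      rw [← h1]
      show C (u:B) * X * C a' = C ((u:B) * a') * X
      rw [C_mul]; ring
    -- the unit a' as an element of Bˣ lying in H
    set aU : Bˣ := Units.mk0 a' ha'0 with haU
    have haUH : aU ∈ H := by
      rw [hH]
      refine ⟨(⟨⟨a', ha'⟩, ⟨b', hb'⟩, Subtype.ext hab, Subtype.ext (by
        show b' * a' = 1; rw [mul_comm]; exact hab)⟩ : Aˣ), ?_⟩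
      apply Units.ext
      rfl
    have hmem : (QuotientGroup.mk u : Bˣ ⧸ H) ∈ Cq y := by
      refine ⟨u * aU, ?_, Or.inl ?_⟩
      · rw [hyco]; rfl
      · rw [QuotientGroup.eq]
        simpa using haUH
    exact Set.mem_biUnion hl'Fs (Set.mem_biUnion hyl' hmem)
  have : (Set.univ : Set (Bˣ ⧸ H)).Finite :=
    Set.Finite.subset hCCfin (fun c _ => hcover c)
  exact Set.finite_univ_iff.mp this

end Aux5

section Aux6
open Polynomial
variable {B : Type*} [Field B] {A : Subring B}

theorem assoc_lift (hall : ∀ b : B, b ∈ A) {p q : AXBX B A}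
    (h : Associated (p:B[X]) (q:B[X])) : Associated p q := by
  obtain ⟨w, hw⟩ := h
  obtain ⟨u, huu, hCu⟩ := Polynomial.isUnit_iff.mp w.isUnit
  have hu0 : u ≠ 0 := huu.ne_zero
  have hun : IsUnit (CAe A u (hall u)) := unit_CAe (hall u) (hall u⁻¹) (mul_inv_cancel₀ hu0)
  obtain ⟨U, hU⟩ := hun
  refine ⟨U, ?_⟩
  apply Subtype.ext
  rw [coe_mul', hU]
  show (p:B[X]) * C u = (q:B[X])
  rw [hCu, hw]

theorem ufd_of_field_all (hF : IsField A) (hall : ∀ b : B, b ∈ A) : DomUFD (AXBX B A) := by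
  refine ⟨atomic_of_field hF, fun x hx hu l l' hl hpl hl' hpl' => ?_⟩
  have key : Multiset.Rel Associated
      (↑(l.map (fun q : AXBX B A => (q:B[X]))) : Multiset B[X])
      (↑(l'.map (fun q : AXBX B A => (q:B[X]))) : Multiset B[X]) := by
    apply UniqueFactorizationMonoid.factors_unique
    · intro p hp
      simp only [Multiset.mem_coe, List.mem_map] at hp
      obtain ⟨q, hq, rfl⟩ := hp
      exact irred_coe hF (hl q hq)
    · intro p hp
      simp only [Multiset.mem_coe, List.mem_map] at hp
      obtain ⟨q, hq, rfl⟩ := hp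
      exact irred_coe hF (hl' q hq)
    · have e1 : (l.map (fun q : AXBX B A => (q:B[X]))).prod = (x:B[X]) := by
        rw [hpl]; exact (coe_prod' l).symm
      have e2 : (l'.map (fun q : AXBX B A => (q:B[X]))).prod = (x:B[X]) := by
        rw [hpl']; exact (coe_prod' l').symm
      rw [Multiset.prod_coe, Multiset.prod_coe, e1, e2]; exact Associated.refl _
  have key2 : Multiset.Rel (fun a b : AXBX B A => Associated (a:B[X]) (b:B[X]))
      (↑l) (↑l') := by
    rw [← Multiset.rel_map (f := fun q : AXBX B A => (q:B[X]))
      (g := fun q : AXBX B A => (q:B[X]))]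
    rw [Multiset.map_coe, Multiset.map_coe]
    exact key
  have key3 : Multiset.Rel Associated (↑l : Multiset (AXBX B A)) (↑l') :=
    key2.mono (fun a _ b _ hab => assoc_lift hall hab)
  exact rel_lists key3

theorem eq_of_assoc_X {b : B} (hb : b ≠ 0) (h : Associated (Xe B A) (cXe A b)) :
    b ∈ A ∧ b⁻¹ ∈ A := by
  obtain ⟨U, hU⟩ := h
  obtain ⟨a', b', ha', hb', hab, hx⟩ := isUnit_iff'.mp U.isUnit
  have h1 : ((Xe B A * (U : AXBX B A) : AXBX B A) : B[X]) = ((cXe A b : AXBX B A) : B[X]) :=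
    congrArg Subtype.val hU
  rw [coe_mul', hx] at h1
  have hXco : ((Xe B A : AXBX B A) : B[X]) = X := rfl
  have hcXco : ((cXe A b : AXBX B A) : B[X]) = C b * X := rfl
  rw [hXco, hcXco] at h1
  have h2 := congrArg (fun p : B[X] => p.coeff 1) h1
  have h3 : a' = b := by simpa [coeff_X_one, coeff_C_mul, coeff_mul_C] using h2
  subst h3
  refine ⟨ha', ?_⟩
  have : b' = a'⁻¹ := eq_inv_of_mul_eq_one_left (by rw [mul_comm]; exact hab)
  rw [← this]
  exact hb'

theorem all_mem_of_ufd (h : DomUFD (AXBX B A)) : ∀ b : B, b ∈ A := by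
  intro b
  by_cases hb : b = 0
  · rw [hb]; exact A.zero_mem
  have hF : IsField A := field_of_atomic h.1
  have hp1 : (Xe B A) * (Xe B A) = ([Xe B A, Xe B A] : List (AXBX B A)).prod := by
    rw [List.prod_cons, List.prod_singleton]
  have hp2 : (Xe B A) * (Xe B A) = ([cXe A b, cXe A b⁻¹] : List (AXBX B A)).prod := by
    rw [List.prod_cons, List.prod_singleton]
    exact prod_cXe hb
  have hirr1 : ∀ a ∈ ([Xe B A, Xe B A] : List (AXBX B A)), Irreducible a := by
    intro a ha
    rcases List.mem_cons.mp ha with rfl | ha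
    · exact irred_Xe hF
    · rw [List.mem_singleton.mp ha]; exact irred_Xe hF
  have hirr2 : ∀ a ∈ ([cXe A b, cXe A b⁻¹] : List (AXBX B A)), Irreducible a := by
    intro a ha
    rcases List.mem_cons.mp ha with rfl | ha
    · exact irred_cXe hF hb
    · rw [List.mem_singleton.mp ha]; exact irred_cXe hF (inv_ne_zero hb)
  obtain ⟨l'', hperm, hfa⟩ :=
    h.2 ((Xe B A)*(Xe B A)) x2_ne_zero x2_not_unit _ _ hirr1 hp1 hirr2 hp2
  obtain ⟨y, t, hy1, -, rfl⟩ := List.forall₂_cons_left_iff.mp hfa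
  have hyl : y ∈ ([cXe A b, cXe A b⁻¹] : List (AXBX B A)) :=
    hperm.mem_iff.mpr List.mem_cons_self
  rcases List.mem_cons.mp hyl with rfl | hyl
  · exact (eq_of_assoc_X hb hy1).1
  · rw [List.mem_singleton.mp hyl] at hy1
    have := (eq_of_assoc_X (inv_ne_zero hb) hy1).2
    rwa [inv_inv] at this

end Aux6

theorem statement19 (B : Type*) [Field B] (A : Subring B) :
    ((DomAtomic (AXBX B A) ↔ DomBFD (AXBX B A)) ∧
     (DomBFD (AXBX B A) ↔ DomHFD (AXBX B A)) ∧
     (DomHFD (AXBX B A) ↔ IsField A)) ∧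
    (DomFFD (AXBX B A) ↔
      (IsField A ∧ Finite (Bˣ ⧸ (Units.map (A.subtype.toMonoidHom)).range))) ∧
    (DomUFD (AXBX B A) ↔ (IsField A ∧ ∀ b : B, b ∈ A)) := by
  refine ⟨⟨⟨fun h => bfd_of_field (field_of_atomic h),
      fun h => atomic_of_field (field_of_bfd h)⟩,
    ⟨fun h => hfd_of_field (field_of_bfd h),
      fun h => bfd_of_field (field_of_atomic h.1)⟩,
    ⟨fun h => field_of_atomic h.1, fun h => hfd_of_field h⟩⟩,
    ⟨fun h => ⟨field_of_atomic h.1, finite_quotient_of_ffd h⟩,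
      fun h => ffd_of_field_finite h.1 h.2⟩,
    ⟨fun h => ⟨field_of_atomic h.1, all_mem_of_ufd h⟩,
      fun h => ufd_of_field_all h.1 h.2⟩⟩

end FactorizationPaper
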